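/- Let L, B : ℝ → Matₙ(ℝ) be matrix-valued functions with L differentiable, and suppose L̇(t) = L(t)B(t) − B(t)L(t) for all t ∈ ℝ. Then the characteristic polynomial of L(t) is independent of t, i.e., for all t₀, t₁ ∈ ℝ, charpoly(L(t₀)) = charpoly(L(t₁)). -/

import Mathlib

open Matrix Polynomial

theorem det_hasDerivAt' {n : ℕ} {A : ℝ → Matrix (Fin n) (Fin n) ℝ}
    {A' : Matrix (Fin n) (Fin n) ℝ} {t : ℝ}
    (h : ∀ i j, HasDerivAt (fun s => A s i j) (A' i j) t) :
    HasDerivAt (fun s => (A s).det)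
      (∑ i, ((A t).updateCol i (fun k => A' k i)).det) t := by
  have key : ∀ σ : Equiv.Perm (Fin n),
      HasDerivAt (fun s => ∏ i, A s (σ i) i)
        (∑ i, (∏ j ∈ Finset.univ.erase i, A t (σ j) j) • A' (σ i) i) t :=
    fun σ => HasDerivAt.fun_finsetProd (fun i _ => h (σ i) i)
  have h1 : HasDerivAt (fun s => (A s).det)
      (∑ σ : Equiv.Perm (Fin n), (Equiv.Perm.sign σ : ℝ) *
        ∑ i, (∏ j ∈ Finset.univ.erase i, A t (σ j) j) • A' (σ i) i) t := by
    simp_rw [Matrix.det_apply']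
    exact HasDerivAt.fun_sum (fun σ _ => ((key σ).const_mul _))
  convert h1 using 1
  have e : ∀ i : Fin n, ((A t).updateCol i fun k => A' k i).det
      = ∑ σ : Equiv.Perm (Fin n), (Equiv.Perm.sign σ : ℝ) *
          ((∏ j ∈ Finset.univ.erase i, A t (σ j) j) * A' (σ i) i) := by
    intro i
    rw [Matrix.det_apply']
    refine Finset.sum_congr rfl fun σ _ => ?_
    congr 1
    rw [← Finset.mul_prod_erase _ _ (Finset.mem_univ i), mul_comm]
    congr 1
    · exact Finset.prod_congr rfl fun j hj => by
        rw [Matrix.updateCol_apply, if_neg (Finset.mem_erase.mp hj).1]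
    · rw [Matrix.updateCol_apply, if_pos rfl]
  simp_rw [e, smul_eq_mul, Finset.mul_sum]
  exact Finset.sum_comm

theorem sum_det_updateColumn {n : ℕ} (M N : Matrix (Fin n) (Fin n) ℝ) :
    ∑ i, (M.updateCol i (fun k => N k i)).det
      = Matrix.trace (M.adjugate * N) := by
  simp_rw [← Matrix.cramer_apply, Matrix.cramer_eq_adjugate_mulVec]
  simp [Matrix.trace, Matrix.mulVec, Matrix.mul_apply, Matrix.diag, dotProduct]

theorem trace_adj_comm {n : ℕ} (M B : Matrix (Fin n) (Fin n) ℝ) :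
    Matrix.trace (M.adjugate * (M * B - B * M)) = 0 := by
  rw [mul_sub, Matrix.trace_sub, ← mul_assoc, Matrix.adjugate_mul,
    ← mul_assoc, Matrix.trace_mul_comm (M.adjugate * B) M,
    ← mul_assoc, Matrix.mul_adjugate, sub_self]

theorem eval_charpoly' {n : ℕ} (M : Matrix (Fin n) (Fin n) ℝ) (x : ℝ) :
    M.charpoly.eval x = (x • (1 : Matrix (Fin n) (Fin n) ℝ) - M).det := by
  rw [Matrix.charpoly, ← Polynomial.coe_evalRingHom, RingHom.map_det]
  congr 1
  ext i j
  by_cases h : i = j <;>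
    simp [h, Matrix.charmatrix_apply_eq, Matrix.charmatrix_apply_ne, Matrix.one_apply,
      Matrix.map_apply]

/-- If `L, B : ℝ → Matₙ(ℝ)` with `L` differentiable and `L̇ = L B − B L`, then the
characteristic polynomial of `L(t)` is independent of `t`. -/
theorem stmt_2 (n : ℕ) (L B : ℝ → Matrix (Fin n) (Fin n) ℝ)
    (hL : ∀ t, ∀ i j, HasDerivAt (fun s => L s i j)
      ((L t * B t - B t * L t) i j) t) :
    ∀ t₀ t₁ : ℝ, (L t₀).charpoly = (L t₁).charpoly := by
  intro t₀ t₁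
  apply Polynomial.funext
  intro x
  rw [eval_charpoly', eval_charpoly']
  have main : ∀ t : ℝ, HasDerivAt
      (fun s => (x • (1 : Matrix (Fin n) (Fin n) ℝ) - L s).det) 0 t := by
    intro t
    set M : Matrix (Fin n) (Fin n) ℝ := x • 1 - L t with hM
    have hD : ∀ i j, HasDerivAt
        (fun s => (x • (1 : Matrix (Fin n) (Fin n) ℝ) - L s) i j)
        ((M * B t - B t * M) i j) t := by
      intro i j
      have h1 : HasDerivAt (fun s => (x • (1 : Matrix (Fin n) (Fin n) ℝ)) i j - L s i j)
          (-((L t * B t - B t * L t) i j)) t := (hL t i j).const_sub _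
      have h2 : M * B t - B t * M = -(L t * B t - B t * L t) := by
        rw [hM]
        simp only [sub_mul, mul_sub, smul_mul_assoc, one_mul, mul_smul_comm, mul_one]
        abel
      rw [h2]
      exact h1
    have := det_hasDerivAt' hD
    rwa [sum_det_updateColumn, trace_adj_comm] at this
  have hdiff : Differentiable ℝ (fun s => (x • (1 : Matrix (Fin n) (Fin n) ℝ) - L s).det) :=
    fun s => (main s).differentiableAt
  exact is_const_of_deriv_eq_zero hdiff (fun s => (main s).deriv) t₀ t₁
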